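/- Let p be a prime with p ≡ 1 (mod 4). For e ∈ F_p define φ(e) = Σ_{m ∈ F_p} χ(m)·χ(m² + e) (an integer). Then for any nonzero square r and any non-square n in F_p, the integer φ(e) is even for all e, and (φ(r)/2)² + (φ(n)/2)² = p. -/

import Mathlib

open Finset

namespace JacobsthalAux

variable {p : ℕ} [Fact p.Prime]

local notation "χ" => quadraticChar (ZMod p)

private lemma rc2 (h4 : p % 4 = 1) : ringChar (ZMod p) ≠ 2 := by
  rw [ZMod.ringChar_zmod_n]
  rintro rfl; norm_num at h4

private lemma chi_neg_one (h4 : p % 4 = 1) : χ (-1) = 1 := by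
  rw [quadraticChar_one_iff_isSquare (neg_ne_zero.mpr one_ne_zero),
    FiniteField.isSquare_neg_one_iff, ZMod.card]
  omega

private lemma chi_eval (e : ZMod p) :
    χ e = if e = 0 then 0 else if IsSquare e then 1 else -1 := by
  split_ifs with h1 h2
  · simp [h1]
  · exact (quadraticChar_one_iff_isSquare h1).mpr h2
  · exact quadraticChar_neg_one_iff_not_isSquare.mpr h2

private lemma sum_ite_ne : ∑ x : ZMod p, (if x = 0 then (0:ℤ) else 1) = (p:ℤ) - 1 := by
  calc ∑ x : ZMod p, (if x = 0 then (0:ℤ) else 1)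
      = ∑ x : ZMod p, ((1:ℤ) - if x = 0 then 1 else 0) := by
        apply sum_congr rfl; intros; split_ifs <;> ring
    _ = (p:ℤ) - 1 := by
        rw [Finset.sum_sub_distrib, Finset.sum_const,
          Finset.sum_ite_eq' univ (0 : ZMod p) (fun _ => (1:ℤ))]
        simp [ZMod.card]

private lemma even_phi (h4 : p % 4 = 1) (e : ZMod p) :
    Even (∑ m : ZMod p, χ m * χ (m ^ 2 + e)) := by
  suffices h : (∑ m : ZMod p, ((χ m * χ (m ^ 2 + e) : ℤ) : ZMod 2)) = 0 by
    rw [even_iff_two_dvd]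
    apply (ZMod.intCast_zmod_eq_zero_iff_dvd _ 2).mp
    rw [Int.cast_sum]; exact h
  apply Finset.sum_ninvolution (fun a => -a)
  · intro a
    have h1 : χ (-a) = χ a := by
      rw [show (-a : ZMod p) = -1 * a by ring, map_mul, chi_neg_one h4, one_mul]
    rw [show ((-a)^2 : ZMod p) = a^2 by ring, h1]
    exact CharTwo.add_self_eq_zero _
  · intro a hfa h
    have ha : a = 0 := by
      have h2 : (2 : ZMod p) * a = 0 := by linear_combination -h
      rcases mul_eq_zero.mp h2 with h'|h'
      · exact absurd h' (Ring.two_ne_zero (rc2 h4))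
      · exact h'
    apply hfa
    simp [ha]
  · intro a; exact mem_univ _
  · intro a; simp

private lemma sum_shift (h4 : p % 4 = 1) (c : ZMod p) :
    ∑ x : ZMod p, χ x * χ (x + c) = if c = 0 then (p:ℤ) - 1 else -1 := by
  split_ifs with hc
  · subst hc
    calc ∑ x : ZMod p, χ x * χ (x + 0)
        = ∑ x : ZMod p, (if x = 0 then (0:ℤ) else 1) := by
          apply sum_congr rfl; intro x _
          rw [add_zero, ← sq, chi_eval]
          split_ifs with h <;> simp [h]
      _ = (p:ℤ) - 1 := sum_ite_ne
  · rw [← Finset.sum_erase_add _ _ (mem_univ (0 : ZMod p))]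
    rw [show (χ 0 * χ (0 + c) : ℤ) = 0 by simp]
    rw [add_zero]
    have key : ∀ x ∈ univ.erase (0 : ZMod p), χ x * χ (x + c) = χ (1 + c * x⁻¹) := by
      intro x hx
      have hx0 : x ≠ 0 := (mem_erase.mp hx).1
      have hx' : x + c = x * (1 + c * x⁻¹) := by field_simp
      rw [hx', map_mul, ← mul_assoc, ← sq, quadraticChar_sq_one hx0, one_mul]
    rw [Finset.sum_congr rfl key]
    have hbij : ∑ x ∈ univ.erase (0 : ZMod p), χ (1 + c * x⁻¹)
        = ∑ z ∈ univ.erase (1 : ZMod p), χ z := by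
      apply Finset.sum_nbij' (i := fun x => 1 + c * x⁻¹) (j := fun z => c * (z - 1)⁻¹)
      · intro x hx
        have hx0 : x ≠ 0 := (mem_erase.mp hx).1
        rw [mem_erase]
        refine ⟨?_, mem_univ _⟩
        intro h
        have : c * x⁻¹ = 0 := by linear_combination h
        rcases mul_eq_zero.mp this with h'|h'
        · exact hc h'
        · exact hx0 (inv_eq_zero.mp h')
      · intro z hz
        have hz1 : z ≠ 1 := (mem_erase.mp hz).1
        rw [mem_erase]
        refine ⟨?_, mem_univ _⟩
        intro h
        rcases mul_eq_zero.mp h with h'|h'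
        · exact hc h'
        · exact hz1 (by rw [inv_eq_zero, sub_eq_zero] at h'; exact h')
      · intro x hx
        have hx0 : x ≠ 0 := (mem_erase.mp hx).1
        field_simp
        simp [hc]
      · intro z hz
        have hz1 : z ≠ 1 := (mem_erase.mp hz).1
        have : z - 1 ≠ 0 := sub_ne_zero.mpr hz1
        field_simp
        ring
      · intro x hx; rfl
    rw [hbij]
    have := Finset.sum_erase_add univ (fun z => (χ z : ℤ)) (mem_univ (1 : ZMod p))
    rw [quadraticChar_sum_zero (rc2 h4)] at this
    simp only [map_one] at this
    linarith

private lemma scale (t : ZMod p) (ht : t ≠ 0) (e : ZMod p) :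
    (∑ m : ZMod p, χ m * χ (m ^ 2 + t ^ 2 * e)) = χ t * ∑ m : ZMod p, χ m * χ (m ^ 2 + e) := by
  rw [Finset.mul_sum]
  refine (Fintype.sum_equiv (Equiv.mulLeft₀ t ht)
    (fun m => χ t * (χ m * χ (m ^ 2 + e))) _ ?_).symm
  intro x
  simp only [Equiv.mulLeft₀_apply]
  rw [map_mul, show ((t*x)^2 + t^2*e : ZMod p) = t^2*(x^2+e) by ring, map_mul,
    quadraticChar_sq_one' ht]
  ring


private lemma inner_count (h4 : p % 4 = 1) (m : ZMod p) :
    ∑ k : ZMod p, (if k ^ 2 = m ^ 2 then (p:ℤ) * (χ m * χ k) else 0)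
      = if m = 0 then (0:ℤ) else 2 * (p:ℤ) := by
  split_ifs with hm
  · subst hm
    apply Finset.sum_eq_zero
    intro k _
    split_ifs <;> simp
  · have hmm : m ≠ -m := by
      intro h
      have h2 : (2 : ZMod p) * m = 0 := by linear_combination h
      rcases mul_eq_zero.mp h2 with h'|h'
      · exact Ring.two_ne_zero (rc2 h4) h'
      · exact hm h'
    have hfil : univ.filter (fun k : ZMod p => k ^ 2 = m ^ 2) = {m, -m} := by
      ext k
      simp only [mem_filter, mem_univ, true_and, mem_insert, mem_singleton]
      exact (Commute.all k m).sq_eq_sq_iff_eq_or_eq_neg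
    rw [← Finset.sum_filter, hfil, Finset.sum_pair hmm]
    have h1 : χ (-m) = χ m := by
      rw [show (-m : ZMod p) = -1 * m by ring, map_mul, chi_neg_one h4, one_mul]
    rw [h1, ← sq, quadraticChar_sq_one hm]
    ring

private lemma sum_sq (h4 : p % 4 = 1) :
    ∑ e : ZMod p, (∑ m : ZMod p, χ m * χ (m ^ 2 + e)) ^ 2 = 2 * p * ((p:ℤ) - 1) := by
  have step1 : ∀ e : ZMod p, (∑ m : ZMod p, χ m * χ (m ^ 2 + e)) ^ 2
      = ∑ m : ZMod p, ∑ k : ZMod p, (χ m * χ k) * (χ (m ^ 2 + e) * χ (k ^ 2 + e)) := by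
    intro e
    rw [sq, Finset.sum_mul_sum]
    apply Finset.sum_congr rfl; intro m _
    apply Finset.sum_congr rfl; intro k _
    ring
  calc ∑ e : ZMod p, (∑ m : ZMod p, χ m * χ (m ^ 2 + e)) ^ 2
      = ∑ m : ZMod p, ∑ k : ZMod p, ∑ e : ZMod p,
          (χ m * χ k) * (χ (m ^ 2 + e) * χ (k ^ 2 + e)) := by
        rw [Finset.sum_congr rfl (fun e _ => step1 e), Finset.sum_comm]
        apply Finset.sum_congr rfl; intro m _
        rw [Finset.sum_comm]
    _ = ∑ m : ZMod p, ∑ k : ZMod p,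
          (χ m * χ k) * (if k ^ 2 = m ^ 2 then (p:ℤ) - 1 else -1) := by
        apply Finset.sum_congr rfl; intro m _
        apply Finset.sum_congr rfl; intro k _
        rw [← Finset.mul_sum]
        congr 1
        have reidx : ∑ e : ZMod p, χ (m ^ 2 + e) * χ (k ^ 2 + e)
            = ∑ x : ZMod p, χ x * χ (x + (k ^ 2 - m ^ 2)) := by
          apply Fintype.sum_equiv (Equiv.addLeft (m ^ 2) : ZMod p ≃ ZMod p)
          intro x
          simp only [Equiv.coe_addLeft]
          rw [show m ^ 2 + x + (k ^ 2 - m ^ 2) = k ^ 2 + x by ring]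
        rw [reidx, sum_shift h4]
        congr 1
        simp [sub_eq_zero]
    _ = (∑ m : ZMod p, ∑ k : ZMod p, (if k ^ 2 = m ^ 2 then (p:ℤ) * (χ m * χ k) else 0))
        - ∑ m : ZMod p, ∑ k : ZMod p, (χ m : ℤ) * χ k := by
        rw [← Finset.sum_sub_distrib]
        apply Finset.sum_congr rfl; intro m _
        rw [← Finset.sum_sub_distrib]
        apply Finset.sum_congr rfl; intro k _
        split_ifs <;> ring
    _ = 2 * p * ((p:ℤ) - 1) := by
        have h0 : ∑ m : ZMod p, ∑ k : ZMod p, (χ m : ℤ) * χ k = 0 := by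
          rw [← Finset.sum_mul_sum, quadraticChar_sum_zero (rc2 h4), zero_mul]
        rw [h0, sub_zero, Finset.sum_congr rfl (fun m _ => inner_count h4 m)]
        calc ∑ m : ZMod p, (if m = 0 then (0:ℤ) else 2 * (p:ℤ))
            = ∑ m : ZMod p, (2 * (p:ℤ)) * (if m = 0 then (0:ℤ) else 1) := by
              apply Finset.sum_congr rfl; intros; split_ifs <;> ring
          _ = 2 * p * ((p:ℤ) - 1) := by rw [← Finset.mul_sum, sum_ite_ne]


end JacobsthalAux

open JacobsthalAux Finset in
/-- Jacobsthal's theorem: for a prime `p ≡ 1 (mod 4)`, with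
`φ(e) = ∑_{m ∈ F_p} χ(m)·χ(m² + e)`, every `φ(e)` is even, and for any nonzero square `r`
and any non-square `n` in `F_p` one has `(φ(r)/2)² + (φ(n)/2)² = p`. -/
theorem jacobsthal_sum_of_two_squares {p : ℕ} [Fact p.Prime] (h4 : p % 4 = 1)
    (φ : ZMod p → ℤ)
    (hφ : ∀ e : ZMod p,
      φ e = ∑ m : ZMod p, quadraticChar (ZMod p) m * quadraticChar (ZMod p) (m ^ 2 + e))
    (r : ZMod p) (hr : r ≠ 0) (hr' : IsSquare r)
    (n : ZMod p) (hn : ¬ IsSquare n) :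
    (∀ e : ZMod p, Even (φ e)) ∧ (φ r / 2) ^ 2 + (φ n / 2) ^ 2 = (p : ℤ) := by
  set χp := quadraticChar (ZMod p) with hχ
  have heven : ∀ e : ZMod p, Even (φ e) := fun e => (hφ e) ▸ even_phi h4 e
  refine ⟨heven, ?_⟩
  have hn0 : n ≠ 0 := fun h => hn (h ▸ IsSquare.zero)
  -- squared scaling
  have hscale : ∀ (t : ZMod p), t ≠ 0 → ∀ e, (φ (t ^ 2 * e)) ^ 2 = (φ e) ^ 2 := by
    intro t ht e
    rw [hφ, hφ, scale t ht e, mul_pow, quadraticChar_sq_one ht, one_mul]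
  -- squares class
  have hA : ∀ e : ZMod p, e ≠ 0 → IsSquare e → (φ e) ^ 2 = (φ r) ^ 2 := by
    intro e he hes
    obtain ⟨u, hu⟩ := hr'
    obtain ⟨s, hs⟩ := hes
    have hu0 : u ≠ 0 := fun h => hr (by rw [hu, h, mul_zero])
    have hs0 : s ≠ 0 := fun h => he (by rw [hs, h, mul_zero])
    have he' : e = (s * u⁻¹) ^ 2 * r := by
      rw [hu, hs]; field_simp
    rw [he', hscale _ (mul_ne_zero hs0 (inv_ne_zero hu0))]
  -- nonsquares class
  have hB : ∀ e : ZMod p, ¬ IsSquare e → (φ e) ^ 2 = (φ n) ^ 2 := by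
    intro e hes
    have he : e ≠ 0 := fun h => hes (h ▸ IsSquare.zero)
    have hχe : χp e = -1 := quadraticChar_neg_one_iff_not_isSquare.mpr hes
    have hχn : χp n = -1 := quadraticChar_neg_one_iff_not_isSquare.mpr hn
    have hχni : χp n⁻¹ = -1 := by
      have h1 : χp n * χp n⁻¹ = 1 := by
        rw [← map_mul, mul_inv_cancel₀ hn0, map_one]
      rw [hχn] at h1; linarith
    have hsq : IsSquare (e * n⁻¹) := by
      apply (quadraticChar_one_iff_isSquare (mul_ne_zero he (inv_ne_zero hn0))).mp
      rw [map_mul, hχe, hχni]; norm_num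
    obtain ⟨t, ht⟩ := hsq
    have ht0 : t ≠ 0 := by
      intro h
      rw [h, mul_zero] at ht
      exact (mul_ne_zero he (inv_ne_zero hn0)) ht
    have he' : e = t ^ 2 * n := by
      rw [sq, ← ht]
      field_simp
    rw [he', hscale _ ht0]
  -- pointwise description of φ e ^ 2
  have hφ0 : φ 0 = 0 := by
    rw [hφ]
    calc ∑ m : ZMod p, χp m * χp (m ^ 2 + 0) = ∑ m : ZMod p, χp m := by
          apply Finset.sum_congr rfl
          intro m _
          rcases eq_or_ne m 0 with h|h
          · simp [h, hχ, quadraticChar_zero]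
          · rw [add_zero, quadraticChar_sq_one' h, mul_one]
      _ = 0 := quadraticChar_sum_zero (rc2 h4)
  set A := (φ r) ^ 2 with hAdef
  set B := (φ n) ^ 2 with hBdef
  have hpt : ∀ e : ZMod p, 2 * (φ e) ^ 2
      = (A + B) * (if e = 0 then (0:ℤ) else 1) + (A - B) * χp e := by
    intro e
    rw [chi_eval]
    rcases eq_or_ne e 0 with h|h
    · simp [h, hφ0]
    · rcases em (IsSquare e) with hs|hs
      · rw [hA e h hs]; simp [h, hs]; ring
      · rw [hB e hs]; simp [h, hs]; ring
  have hsum2 : 2 * ∑ e : ZMod p, (φ e) ^ 2 = (A + B) * ((p:ℤ) - 1) := by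
    rw [Finset.mul_sum, Finset.sum_congr rfl (fun e _ => hpt e),
      Finset.sum_add_distrib, ← Finset.mul_sum, ← Finset.mul_sum,
      sum_ite_ne, quadraticChar_sum_zero (rc2 h4)]
    ring
  have hT : ∑ e : ZMod p, (φ e) ^ 2 = 2 * p * ((p:ℤ) - 1) := by
    simp only [hφ]; exact sum_sq h4
  have hp2 : 2 ≤ (p:ℤ) := by exact_mod_cast (Fact.out : p.Prime).two_le
  have hkey : A + B = 4 * p := by
    have h1 : (A + B) * ((p:ℤ) - 1) = 4 * p * ((p:ℤ) - 1) := by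
      rw [← hsum2, hT]; ring
    have h2 : (p:ℤ) - 1 ≠ 0 := by linarith
    exact mul_right_cancel₀ h2 h1
  obtain ⟨a, ha⟩ := heven r
  obtain ⟨b, hb⟩ := heven n
  have hra : φ r / 2 = a := by omega
  have hnb : φ n / 2 = b := by omega
  rw [hra, hnb]
  have : (a + a) ^ 2 + (b + b) ^ 2 = 4 * p := by rw [← ha, ← hb]; exact hkey
  nlinarith [this]
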